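/- Let H be a separable complex Hilbert space, let P be a bounded idempotent operator on H, and let J be a symmetry. Then JPJ = I - P* if and only if the operator J' := i J (2P - I)|2P - I|⁻¹ is a symmetry satisfying J'PJ' = I - P (where i = √(-1)). -/

import Mathlib

open ContinuousLinearMap

variable {H : Type*} [NormedAddCommGroup H] [InnerProductSpace ℂ H]
  [CompleteSpace H] [TopologicalSpace.SeparableSpace H]

/-- The absolute value `|A| = (A*A)^(1/2)` of a bounded operator. -/
noncomputable def absOp (A : H →L[ℂ] H) : H →L[ℂ] H := CFC.sqrt (star A * A)

/-- A symmetry is a self-adjoint unitary: `J = J* = J⁻¹`. -/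
def IsSymmetry (J : H →L[ℂ] H) : Prop := IsSelfAdjoint J ∧ J * J = 1

set_option maxHeartbeats 4000000 in
set_option synthInstance.maxHeartbeats 1000000 in
theorem stmt_17 (P J : H →L[ℂ] H) (hP : P * P = P) (hJ : IsSymmetry J) :
    J * P * J = 1 - star P ↔
      (IsSymmetry (Complex.I • (J * (((2 : ℂ) • P - 1) * Ring.inverse (absOp ((2 : ℂ) • P - 1))))) ∧
        (Complex.I • (J * (((2 : ℂ) • P - 1) * Ring.inverse (absOp ((2 : ℂ) • P - 1))))) * P *
          (Complex.I • (J * (((2 : ℂ) • P - 1) * Ring.inverse (absOp ((2 : ℂ) • P - 1))))) =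
          1 - P) := by
  obtain ⟨hJsa', hJ2⟩ := hJ
  have hJsa : star J = J := hJsa'
  set T : H →L[ℂ] H := (2 : ℂ) • P - 1 with hTdef
  have hT2 : T * T = 1 := by
    simp only [hTdef, sub_mul, mul_sub, smul_mul_assoc, mul_smul_comm, smul_smul, hP,
      one_mul, mul_one]
    module
  have hTs2 : star T * star T = 1 := by rw [← star_mul, hT2, star_one]
  have hTsT : (0 : H →L[ℂ] H) ≤ star T * T := star_mul_self_nonneg T
  set A : H →L[ℂ] H := CFC.sqrt (star T * T) with hAdef
  have habs : absOp T = A := by rw [hAdef]; rfl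
  have hA0 : (0 : H →L[ℂ] H) ≤ A := by rw [hAdef]; exact CFC.sqrt_nonneg _
  have hAsa : star A = A := (IsSelfAdjoint.of_nonneg hA0)
  have hA2 : A * A = star T * T := by rw [hAdef]; exact CFC.sqrt_mul_sqrt_self _ hTsT
  set C : H →L[ℂ] H := T * star T with hCdef
  have hCsa : star C = C := by rw [hCdef, star_mul, star_star]
  have hCA2 : C * (A * A) = 1 := by
    rw [hA2, hCdef]
    calc T * star T * (star T * T) = T * ((star T * star T) * T) := by noncomm_ring
      _ = 1 := by rw [hTs2, one_mul, hT2]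
  have hA2C : (A * A) * C = 1 := by
    rw [hA2, hCdef]
    calc star T * T * (T * star T) = star T * ((T * T) * star T) := by noncomm_ring
      _ = 1 := by rw [hT2, one_mul, hTs2]
  have hAC : A * C = C * A := by
    calc A * C = (C * (A * A)) * (A * C) := by rw [hCA2, one_mul]
      _ = C * A * ((A * A) * C) := by noncomm_ring
      _ = C * A := by rw [hA2C, mul_one]
  set D : H →L[ℂ] H := C * A with hDdef
  -- note: hAC is now `A * C = D`
  have hDA : D * A = 1 := by rw [hDdef, mul_assoc, hCA2]
  have hAD : A * D = 1 := by rw [hDdef, ← mul_assoc, hAC]; exact hDA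
  have hDsa : star D = D := by rw [hDdef, star_mul, hAsa, hCsa, hAC]
  have hD0 : (0 : H →L[ℂ] H) ≤ D := by
    have h := star_left_conjugate_nonneg hA0 D
    rwa [hDsa, hDA, one_mul] at h
  have hD2 : D * D = C := by
    calc D * D = (C * A) * (C * A) := by rw [hDdef]
      _ = C * ((A * C) * A) := by noncomm_ring
      _ = C * ((C * A) * A) := by rw [hAC, hDdef]
      _ = C * (C * (A * A)) := by noncomm_ring
      _ = C := by rw [hCA2, mul_one]
  have hRinv : Ring.inverse (absOp T) = D := by
    rw [habs]
    exact Ring.inverse_unit ⟨A, D, hAD, hDA⟩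
  rw [hRinv]
  have hTs : star T = A * A * T := by
    calc star T = star T * (T * T) := by rw [hT2, mul_one]
      _ = (star T * T) * T := by noncomm_ring
      _ = A * A * T := by rw [← hA2]
  have hTC : T * C = star T := by rw [hCdef, ← mul_assoc, hT2, one_mul]
  have hTsA2 : star T * (A * A) = T := by
    have h := congrArg star hTs
    rw [star_star, star_mul, star_mul, hAsa] at h
    exact h.symm
  have hTAT : T * A * T = D := by
    have hA3 : (0 : H →L[ℂ] H) ≤ A * A * A := by
      have h := star_left_conjugate_nonneg hA0 A
      rwa [hAsa] at h
    have hpos : (0 : H →L[ℂ] H) ≤ T * A * T := by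
      have h := star_left_conjugate_nonneg hA3 T
      have he : star T * (A * A * A) * T = T * A * T := by
        calc star T * (A * A * A) * T = (star T * (A * A)) * A * T := by noncomm_ring
          _ = T * A * T := by rw [hTsA2]
      rwa [he] at h
    have hsq : (T * A * T) * (T * A * T) = C := by
      calc (T * A * T) * (T * A * T) = T * A * (T * T) * A * T := by noncomm_ring
        _ = T * (A * A) * T := by rw [hT2]; noncomm_ring
        _ = T * (star T * T) * T := by rw [hA2]
        _ = (T * star T) * (T * T) := by noncomm_ring
        _ = C := by rw [hT2, mul_one, ← hCdef]
    have h1 : CFC.sqrt C = T * A * T := CFC.sqrt_unique hsq hpos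
    have h2 : CFC.sqrt C = D := CFC.sqrt_unique hD2 hD0
    exact h1.symm.trans h2
  have hTA : T * A = D * T := by
    calc T * A = T * A * (T * T) := by rw [hT2, mul_one]
      _ = (T * A * T) * T := by noncomm_ring
      _ = D * T := by rw [hTAT]
  have hAT : A * T = T * D := by
    calc A * T = (T * T) * (A * T) := by rw [hT2, one_mul]
      _ = T * (T * A * T) := by noncomm_ring
      _ = T * D := by rw [hTAT]
  have hDT : D * T = T * A := hTA.symm
  have hTsA : star T * A = T * D := by
    calc star T * A = star T * ((A * A) * D) := by rw [mul_assoc, hAD, mul_one]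
      _ = (star T * (A * A)) * D := by noncomm_ring
      _ = T * D := by rw [hTsA2]
  have hDTs : D * star T = T * D := by
    calc D * star T = D * (A * A * T) := by rw [hTs]
      _ = (D * A) * (A * T) := by noncomm_ring
      _ = A * T := by rw [hDA, one_mul]
      _ = T * D := hAT
  have hV2 : (T * D) * (T * D) = 1 := by
    calc (T * D) * (T * D) = T * (D * T) * D := by noncomm_ring
      _ = T * (T * A) * D := by rw [hDT]
      _ = (T * T) * (A * D) := by noncomm_ring
      _ = 1 := by rw [hT2, hAD, one_mul]
  have hVs : star (T * D) = T * D := by rw [star_mul, hDsa, hDTs]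
  have hJVV : J = (J * (T * D)) * (T * D) := by rw [mul_assoc, hV2, mul_one]
  have hPT : P = (2⁻¹ : ℂ) • (T + 1) := by rw [hTdef]; module
  have hsP : star T = (2 : ℂ) • star P - 1 := by
    rw [hTdef, star_sub, star_smul, star_one]
    norm_num
  have hKsq : ∀ X : H →L[ℂ] H, (Complex.I • X) * (Complex.I • X) = -(X * X) := by
    intro X
    simp only [smul_mul_assoc, mul_smul_comm, smul_smul, Complex.I_mul_I, neg_smul, one_smul]
  have hsandK : ∀ X Y : H →L[ℂ] H,
      (Complex.I • X) * Y * (Complex.I • X) = -(X * Y * X) := by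
    intro X Y
    simp only [smul_mul_assoc, mul_smul_comm, smul_smul, Complex.I_mul_I, neg_smul, one_smul]
  set K : H →L[ℂ] H := Complex.I • (J * (T * D)) with hKdef
  constructor
  · -- forward direction
    intro h
    have hJTJ : J * T * J = -star T := by
      rw [hsP, hTdef]
      simp only [sub_mul, mul_sub, one_mul, mul_one, smul_mul_assoc, mul_smul_comm, hJ2, h]
      module
    have hJT : J * T = -(star T * J) := by
      calc J * T = (J * T * J) * J := by rw [mul_assoc (J * T) J J, hJ2, mul_one]
        _ = -(star T * J) := by rw [hJTJ, neg_mul]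
    have hTJ : T * J = -(J * star T) := by
      calc T * J = (J * J) * (T * J) := by rw [hJ2, one_mul]
        _ = J * (J * T * J) := by noncomm_ring
        _ = J * (-star T) := by rw [hJTJ]
        _ = -(J * star T) := by rw [mul_neg]
    have hJTs : J * star T = -(T * J) := by rw [hTJ, neg_neg]
    have hTsJ : star T * J = -(J * T) := by rw [hJT, neg_neg]
    have hJAJ : J * A * J = D := by
      have hp : (0 : H →L[ℂ] H) ≤ J * A * J := by
        have hc := star_left_conjugate_nonneg hA0 J
        rwa [hJsa] at hc
      have hsq : (J * A * J) * (J * A * J) = C := by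
        calc (J * A * J) * (J * A * J) = J * A * (J * J) * (A * J) := by noncomm_ring
          _ = J * (A * A) * J := by rw [hJ2]; noncomm_ring
          _ = J * (star T * T) * J := by rw [hA2]
          _ = (J * star T) * (T * J) := by noncomm_ring
          _ = (J * star T) * (-(J * star T)) := by rw [hTJ]
          _ = -((J * (star T * J)) * star T) := by noncomm_ring
          _ = -((J * (-(J * T))) * star T) := by rw [hTsJ]
          _ = (J * J) * (T * star T) := by noncomm_ring
          _ = C := by rw [hJ2, one_mul, ← hCdef]
      have h1 : CFC.sqrt C = J * A * J := CFC.sqrt_unique hsq hp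
      have h2 : CFC.sqrt C = D := CFC.sqrt_unique hD2 hD0
      exact h1.symm.trans h2
    have hJA : J * A = D * J := by
      calc J * A = (J * A * J) * J := by rw [mul_assoc (J * A) J J, hJ2, mul_one]
        _ = D * J := by rw [hJAJ]
    have hAJ : A * J = J * D := by
      calc A * J = (J * J) * (A * J) := by rw [hJ2, one_mul]
        _ = J * (J * A * J) := by noncomm_ring
        _ = J * D := by rw [hJAJ]
    have hDJ : D * J = J * A := hJA.symm
    have hK'2 : (J * (T * D)) * (J * (T * D)) = -1 := by
      calc (J * (T * D)) * (J * (T * D)) = J * T * (D * J) * (T * D) := by noncomm_ring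
        _ = J * T * (J * A) * (T * D) := by rw [hDJ]
        _ = (J * T * J) * ((A * T) * D) := by noncomm_ring
        _ = (-star T) * ((T * D) * D) := by rw [hJTJ, hAT]
        _ = -(star T * T * (D * D)) := by noncomm_ring
        _ = -((A * A) * C) := by rw [hD2, ← hA2]
        _ = -1 := by rw [hA2C]
    have hK'T : (J * (T * D)) * T * (J * (T * D)) = T := by
      calc (J * (T * D)) * T * (J * (T * D))
          = J * T * (D * T) * (J * (T * D)) := by noncomm_ring
        _ = J * T * (T * A) * (J * (T * D)) := by rw [hDT]
        _ = J * ((T * T) * (A * J)) * (T * D) := by noncomm_ring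
        _ = J * ((T * T) * (J * D)) * (T * D) := by rw [hAJ]
        _ = (J * J) * (D * (T * D)) := by rw [hT2]; noncomm_ring
        _ = (D * T) * D := by rw [hJ2]; noncomm_ring
        _ = (T * A) * D := by rw [hDT]
        _ = T * (A * D) := by noncomm_ring
        _ = T := by rw [hAD, mul_one]
    have hK's : star (J * (T * D)) = -(J * (T * D)) := by
      rw [star_mul, hVs, hJsa]
      calc (T * D) * J = T * (D * J) := by noncomm_ring
        _ = T * (J * A) := by rw [hDJ]
        _ = (T * J) * A := by noncomm_ring
        _ = (-(J * star T)) * A := by rw [hTJ]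
        _ = -(J * (star T * A)) := by noncomm_ring
        _ = -(J * (T * D)) := by rw [hTsA]
    refine ⟨⟨?_, ?_⟩, ?_⟩
    · show star K = K
      rw [hKdef, star_smul, Complex.star_def, Complex.conj_I, hK's, neg_smul, smul_neg, neg_neg]
    · show K * K = 1
      rw [hKdef, hKsq, hK'2, neg_neg]
    · have hexp : (J * (T * D)) * P * (J * (T * D)) =
          (2⁻¹ : ℂ) • ((J * (T * D)) * T * (J * (T * D)) + (J * (T * D)) * (J * (T * D))) := by
        rw [hPT]
        simp only [mul_smul_comm, smul_mul_assoc, mul_add, add_mul, mul_one]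
      rw [hKdef, hsandK, hexp, hK'T, hK'2, hPT]
      module
  · -- converse direction
    rintro ⟨⟨hKsa0, hKK⟩, hKPK⟩
    have hKsa : star K = K := hKsa0
    have hK's : star (J * (T * D)) = -(J * (T * D)) := by
      rw [hKdef, star_smul, Complex.star_def, Complex.conj_I] at hKsa
      have h2 := congrArg (fun x : H →L[ℂ] H => Complex.I • x) hKsa
      simp only [smul_neg, smul_smul, mul_neg, Complex.I_mul_I, neg_neg, one_smul, neg_smul] at h2
      exact h2
    have hK'2 : (J * (T * D)) * (J * (T * D)) = -1 := by
      have h := hKK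
      rw [hKdef, hKsq] at h
      exact neg_eq_iff_eq_neg.mp h
    have hK'P : (J * (T * D)) * P * (J * (T * D)) = P - 1 := by
      have h := hKPK
      rw [hKdef, hsandK] at h
      exact (neg_eq_iff_eq_neg.mp h).trans (neg_sub 1 P)
    have hK'T : (J * (T * D)) * T * (J * (T * D)) = T := by
      have e1 : (J * (T * D)) * P * (J * (T * D)) =
          (2⁻¹ : ℂ) • ((J * (T * D)) * T * (J * (T * D)) + (J * (T * D)) * (J * (T * D))) := by
        rw [hPT]
        simp only [mul_smul_comm, smul_mul_assoc, mul_add, add_mul, mul_one]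
      rw [e1, hK'2] at hK'P
      calc (J * (T * D)) * T * (J * (T * D))
          = (2 : ℂ) • ((2⁻¹ : ℂ) • ((J * (T * D)) * T * (J * (T * D)) + -1)) + 1 := by module
        _ = (2 : ℂ) • (P - 1) + 1 := by rw [hK'P]
        _ = T := by rw [hPT]; module
    have hKTK : K * T * K = -T := by rw [hKdef, hsandK, hK'T]
    have hKTsK : K * star T * K = -star T := by
      have h5 := congrArg star hKTK
      rw [star_mul, star_mul, hKsa, star_neg] at h5
      rw [← mul_assoc] at h5
      exact h5
    have hKT : K * T = -(T * K) := by
      calc K * T = (K * T * K) * K := by rw [mul_assoc (K * T) K K, hKK, mul_one]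
        _ = -(T * K) := by rw [hKTK, neg_mul]
    have hKTs : K * star T = -(star T * K) := by
      calc K * star T = (K * star T * K) * K := by rw [mul_assoc (K * star T) K K, hKK, mul_one]
        _ = -(star T * K) := by rw [hKTsK, neg_mul]
    have hKAK : K * A * K = A := by
      have hp : (0 : H →L[ℂ] H) ≤ K * A * K := by
        have hc := star_left_conjugate_nonneg hA0 K
        rwa [hKsa] at hc
      have hsq : (K * A * K) * (K * A * K) = star T * T := by
        calc (K * A * K) * (K * A * K) = K * A * (K * K) * (A * K) := by noncomm_ring
          _ = (K * (A * A)) * K := by rw [hKK]; noncomm_ring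
          _ = (K * (star T * T)) * K := by rw [hA2]
          _ = ((K * star T) * T) * K := by noncomm_ring
          _ = ((-(star T * K)) * T) * K := by rw [hKTs]
          _ = -(star T * ((K * T) * K)) := by noncomm_ring
          _ = -(star T * ((-(T * K)) * K)) := by rw [hKT]
          _ = star T * (T * (K * K)) := by noncomm_ring
          _ = star T * T := by rw [hKK, mul_one]
      have h1 : CFC.sqrt (star T * T) = K * A * K := CFC.sqrt_unique hsq hp
      exact (hAdef.trans h1).symm
    have hK'A : (J * (T * D)) * A * (J * (T * D)) = -A := by
      have h := hKAK
      rw [hKdef, hsandK] at h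
      exact neg_eq_iff_eq_neg.mp h
    have hAK' : A * (J * (T * D)) = (J * (T * D)) * A := by
      have h6 : (J * (T * D)) * A * ((J * (T * D)) * (J * (T * D))) = -(A * (J * (T * D))) := by
        rw [← mul_assoc, hK'A, neg_mul]
      rw [hK'2, mul_neg_one] at h6
      exact (neg_inj.mp h6).symm
    have hbig : ((J * (T * D)) * (T * D)) * T * ((J * (T * D)) * (T * D)) = -star T := by
      calc ((J * (T * D)) * (T * D)) * T * ((J * (T * D)) * (T * D))
          = (J * (T * D)) * (T * (D * T)) * ((J * (T * D)) * (T * D)) := by noncomm_ring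
        _ = (J * (T * D)) * (T * (T * A)) * ((J * (T * D)) * (T * D)) := by rw [hDT]
        _ = (J * (T * D)) * ((T * T) * (A * ((J * (T * D)) * (T * D)))) := by noncomm_ring
        _ = (J * (T * D)) * (A * ((J * (T * D)) * (T * D))) := by rw [hT2, one_mul]
        _ = (J * (T * D)) * ((A * (J * (T * D))) * (T * D)) := by noncomm_ring
        _ = (J * (T * D)) * (((J * (T * D)) * A) * (T * D)) := by rw [hAK']
        _ = ((J * (T * D)) * (J * (T * D))) * (A * (T * D)) := by noncomm_ring
        _ = (-1) * (A * (T * D)) := by rw [hK'2]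
        _ = -((A * T) * D) := by noncomm_ring
        _ = -((T * D) * D) := by rw [hAT]
        _ = -(T * (D * D)) := by noncomm_ring
        _ = -(T * C) := by rw [hD2]
        _ = -star T := by rw [hTC]
    have hJTJ : J * T * J = -star T := by
      rw [hJVV]
      exact hbig
    calc J * P * J = J * ((2⁻¹ : ℂ) • (T + 1)) * J := by rw [hPT]
      _ = (2⁻¹ : ℂ) • (J * T * J + J * J) := by
          simp only [mul_smul_comm, smul_mul_assoc, mul_add, add_mul, mul_one]
      _ = (2⁻¹ : ℂ) • (-star T + 1) := by rw [hJTJ, hJ2]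
      _ = 1 - star P := by rw [hsP]; module
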